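/- arXiv:1808.08764 — 2 statements merged into one kernel-verified Lean document; each statement's English description precedes it below -/
import Mathlib

section
/- For Hermitian positive definite matrices p₁ and p₂ and any invertible complex matrix a, the affine-invariant Riemannian distance δ_R(p₁,p₂) = ‖Log(p₁^{-1/2} p₂ p₁^{-1/2})‖_F is invariant under congruence: δ_R(a* p₁ a, a* p₂ a) = δ_R(p₁, p₂). -/
open Matrix
open scoped ComplexOrder Classical

/-- Matrix logarithm of a Hermitian (in particular HPD) matrix, via the spectral theorem. -/
noncomputable def mLog {d : ℕ} (A : Matrix (Fin d) (Fin d) ℂ) : Matrix (Fin d) (Fin d) ℂ :=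
  if hA : A.IsHermitian then
    (hA.eigenvectorUnitary : Matrix (Fin d) (Fin d) ℂ) *
      Matrix.diagonal (fun i => (Real.log (hA.eigenvalues i) : ℂ)) *
      (star hA.eigenvectorUnitary : Matrix (Fin d) (Fin d) ℂ)
  else 0

/-- Matrix exponential. -/
noncomputable def mExp {d : ℕ} (A : Matrix (Fin d) (Fin d) ℂ) : Matrix (Fin d) (Fin d) ℂ :=
  NormedSpace.exp A

/-- Hermitian positive (semi)definite square root. -/
noncomputable def msqrt {d : ℕ} (A : Matrix (Fin d) (Fin d) ℂ) : Matrix (Fin d) (Fin d) ℂ :=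
  if hA : A.PosSemidef then
    hA.1.eigenvectorUnitary.1 * diagonal ((↑) ∘ (√·) ∘ hA.1.eigenvalues) *
      (star hA.1.eigenvectorUnitary : Matrix (Fin d) (Fin d) ℂ)
  else 1

/-- Frobenius norm. -/
noncomputable def frobNorm {d : ℕ} (A : Matrix (Fin d) (Fin d) ℂ) : ℝ :=
  Real.sqrt ((Aᴴ * A).trace.re)

/-- Affine-invariant Riemannian distance. -/
noncomputable def deltaR {d : ℕ} (p₁ p₂ : Matrix (Fin d) (Fin d) ℂ) : ℝ :=
  frobNorm (mLog ((msqrt p₁)⁻¹ * p₂ * (msqrt p₁)⁻¹))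

/-- Real matrix power of an HPD matrix: `x^t = Exp (t • Log x)`. -/
noncomputable def mPow {d : ℕ} (A : Matrix (Fin d) (Fin d) ℂ) (t : ℝ) : Matrix (Fin d) (Fin d) ℂ :=
  mExp ((t : ℂ) • mLog A)

/-- Riemannian logarithmic map at `p`. -/
noncomputable def logMap {d : ℕ} (p q : Matrix (Fin d) (Fin d) ℂ) : Matrix (Fin d) (Fin d) ℂ :=
  msqrt p * mLog ((msqrt p)⁻¹ * q * (msqrt p)⁻¹) * msqrt p

/-- Riemannian exponential map at `p`. -/
noncomputable def expMap {d : ℕ} (p h : Matrix (Fin d) (Fin d) ℂ) : Matrix (Fin d) (Fin d) ℂ :=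
  msqrt p * mExp ((msqrt p)⁻¹ * h * (msqrt p)⁻¹) * msqrt p

/-- Affine-invariant geodesic from `p₁` to `p₂`. -/
noncomputable def geo {d : ℕ} (p₁ p₂ : Matrix (Fin d) (Fin d) ℂ) (t : ℝ) :
    Matrix (Fin d) (Fin d) ℂ :=
  msqrt p₁ * mPow ((msqrt p₁)⁻¹ * p₂ * (msqrt p₁)⁻¹) t * msqrt p₁

section Aux
variable {d : ℕ}

lemma mLog_eq_cfc (A : Matrix (Fin d) (Fin d) ℂ) (hA : A.IsHermitian) :
    mLog A = cfc Real.log A := by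
  rw [hA.cfc_eq, mLog, dif_pos hA]
  rfl

lemma contOn_of_finite (f : ℝ → ℝ) {s : Set ℝ} (hs : s.Finite) : ContinuousOn f s := by
  have : Finite s := hs
  rw [continuousOn_iff_continuous_restrict]
  exact continuous_of_discreteTopology

noncomputable def conjHom (u : Matrix (Fin d) (Fin d) ℂ) (hu : u * uᴴ = 1) (hu' : uᴴ * u = 1) :
    Matrix (Fin d) (Fin d) ℂ →⋆ₐ[ℝ] Matrix (Fin d) (Fin d) ℂ where
  toFun x := u * x * uᴴ
  map_one' := by show u * 1 * uᴴ = 1; rw [Matrix.mul_one, hu]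
  map_mul' x y := by
    show u * (x * y) * uᴴ = u * x * uᴴ * (u * y * uᴴ)
    simp only [Matrix.mul_assoc]
    rw [← Matrix.mul_assoc uᴴ u (y * uᴴ), hu', Matrix.one_mul]
  map_zero' := by simp
  map_add' x y := by simp [Matrix.add_mul, Matrix.mul_add]
  commutes' r := by
    simp [Algebra.algebraMap_eq_smul_one, Matrix.mul_smul, Matrix.smul_mul, hu]
  map_star' x := by
    simp [Matrix.star_eq_conjTranspose, conjTranspose_mul, Matrix.mul_assoc]

lemma mLog_conj (u A : Matrix (Fin d) (Fin d) ℂ) (hu : u * uᴴ = 1) (hu' : uᴴ * u = 1)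
    (hA : A.IsHermitian) : mLog (u * A * uᴴ) = u * mLog A * uᴴ := by
  have hA' : (u * A * uᴴ).IsHermitian := by
    have := isHermitian_conjTranspose_mul_mul uᴴ hA
    rwa [conjTranspose_conjTranspose] at this
  have hsa : IsSelfAdjoint A := hA
  have hsa' : IsSelfAdjoint (conjHom u hu hu' A) := hA'
  have hcont : Continuous (conjHom u hu hu') := by
    show Continuous fun x => u * x * uᴴ
    exact (continuous_const.matrix_mul continuous_id).matrix_mul continuous_const
  have hf : ContinuousOn Real.log (spectrum ℝ A) := contOn_of_finite _ A.finite_real_spectrum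
  have h := StarAlgHomClass.map_cfc (S := ℝ) (conjHom u hu hu') Real.log A hf hcont hsa hsa'
  rw [mLog_eq_cfc _ hA, mLog_eq_cfc _ hA']
  exact h.symm

lemma frob_conj (u Y : Matrix (Fin d) (Fin d) ℂ) (hu : u * uᴴ = 1) (hu' : uᴴ * u = 1) :
    frobNorm (u * Y * uᴴ) = frobNorm Y := by
  unfold frobNorm
  congr 2
  have h1 : (u * Y * uᴴ)ᴴ * (u * Y * uᴴ) = u * (Yᴴ * Y) * uᴴ := by
    simp only [conjTranspose_mul, conjTranspose_conjTranspose, Matrix.mul_assoc]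
    rw [← Matrix.mul_assoc uᴴ u (Y * uᴴ), hu', Matrix.one_mul]
  rw [h1, Matrix.trace_mul_comm (u * (Yᴴ * Y)) uᴴ, ← Matrix.mul_assoc, hu', Matrix.one_mul]

end Aux


section Aux2
variable {d : ℕ}

lemma posDef_conj {p a : Matrix (Fin d) (Fin d) ℂ} (hp : p.PosDef) (ha : IsUnit a.det) :
    (aᴴ * p * a).PosDef := by
  refine PosDef.of_dotProduct_mulVec_pos (isHermitian_conjTranspose_mul_mul a hp.isHermitian) fun x hx => ?_
  have hx' : a *ᵥ x ≠ 0 := by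
    intro h
    apply hx
    have := congrArg (a⁻¹ *ᵥ ·) h
    simpa [Matrix.mulVec_mulVec, Matrix.nonsing_inv_mul a ha] using this
  simpa only [star_mulVec, Matrix.dotProduct_mulVec, Matrix.vecMul_vecMul] using hp.dotProduct_mulVec_pos hx'

lemma msqrt_spec {p : Matrix (Fin d) (Fin d) ℂ} (hp : p.PosDef) :
    (msqrt p).IsHermitian ∧ msqrt p * msqrt p = p ∧ IsUnit (msqrt p).det := by
  rw [msqrt, dif_pos hp.posSemidef]
  have hc : hp.posSemidef.1.eigenvectorUnitary.1 *
      diagonal ((↑) ∘ (√·) ∘ hp.posSemidef.1.eigenvalues) *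
      (star hp.posSemidef.1.eigenvectorUnitary : Matrix (Fin d) (Fin d) ℂ) = cfc Real.sqrt p := by
    rw [hp.posSemidef.1.cfc_eq]
    rfl
  have hsq : cfc Real.sqrt p * cfc Real.sqrt p = p := by
    rw [← cfc_mul Real.sqrt Real.sqrt p]
    rw [cfc_congr (f := fun x => √x * √x) (g := id) (fun x hx => Real.mul_self_sqrt (by
      have h := (Matrix.posSemidef_iff_isHermitian_and_spectrum_nonneg.mp hp.posSemidef).2 hx
      simpa using h))]
    exact cfc_id ℝ p hp.isHermitian
  rw [hc]
  refine ⟨(cfc_predicate Real.sqrt p : IsSelfAdjoint _), hsq, ?_⟩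
  have hdet : (cfc Real.sqrt p).det * (cfc Real.sqrt p).det = p.det := by
    rw [← Matrix.det_mul, hsq]
  have hne : p.det ≠ 0 := hp.det_pos.ne'
  exact isUnit_iff_ne_zero.mpr fun h => hne (by rw [← hdet, h, mul_zero])


theorem deltaR_congruence_invariant {d : ℕ} (p₁ p₂ a : Matrix (Fin d) (Fin d) ℂ)
    (hp₁ : p₁.PosDef) (hp₂ : p₂.PosDef) (ha : IsUnit a.det) :
    deltaR (aᴴ * p₁ * a) (aᴴ * p₂ * a) = deltaR p₁ p₂ := by
  classical
  obtain ⟨hqH, hqq, hqu⟩ := msqrt_spec hp₁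
  obtain ⟨hmH, hmm, hmu⟩ := msqrt_spec (posDef_conj hp₁ ha)
  set q := msqrt p₁ with hq_def
  set m := msqrt (aᴴ * p₁ * a) with hm_def
  have hqiH : (q⁻¹)ᴴ = q⁻¹ := by rw [conjTranspose_nonsing_inv, hqH.eq]
  have hmiH : (m⁻¹)ᴴ = m⁻¹ := by rw [conjTranspose_nonsing_inv, hmH.eq]
  set u := m⁻¹ * aᴴ * q with hu_def
  have hustar : uᴴ = q * a * m⁻¹ := by
    rw [hu_def, conjTranspose_mul, conjTranspose_mul, hmiH, hqH.eq, conjTranspose_conjTranspose,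
      Matrix.mul_assoc]
  have huu : u * uᴴ = 1 := by
    rw [hustar, hu_def]
    have h1 : m⁻¹ * aᴴ * q * (q * a * m⁻¹) = m⁻¹ * (aᴴ * p₁ * a) * m⁻¹ := by
      rw [← hqq]; simp only [Matrix.mul_assoc]
    rw [h1, ← hmm, ← Matrix.mul_assoc, Matrix.nonsing_inv_mul _ hmu, Matrix.one_mul,
      Matrix.mul_nonsing_inv _ hmu]
  have huu' : uᴴ * u = 1 := mul_eq_one_comm.mp huu
  have hX : (q⁻¹ * p₂ * q⁻¹).IsHermitian := by
    have := isHermitian_conjTranspose_mul_mul q⁻¹ hp₂.isHermitian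
    rwa [hqiH] at this
  have key : m⁻¹ * (aᴴ * p₂ * a) * m⁻¹ = u * (q⁻¹ * p₂ * q⁻¹) * uᴴ := by
    rw [hu_def, hustar]
    simp only [Matrix.mul_assoc]
    rw [Matrix.mul_nonsing_inv_cancel_left _ _ hqu, Matrix.nonsing_inv_mul_cancel_left _ _ hqu]
  unfold deltaR
  rw [← hq_def, ← hm_def, key, mLog_conj u _ huu huu' hX, frob_conj u _ huu huu']


end Aux2
end

section
/- The trace of the whitened wavelet coefficient of a noisy observation decomposes additively: if X_{k} = γ_{k}^{1/2} ε_{k} γ_{k}^{1/2} for all k (an intrinsic signal plus noise model), then for the one-step coarsening with equal weights, Tr(Log(M^X)) = Tr(Log(M^γ)) + Tr(Log(M^ε)), where M^X, M^γ, M^ε denote the respective intrinsic weighted means satisfying the Karcher mean equation with the same weights. Specifically: if M^X, M^γ, M^ε are Hermitian positive definite matrices satisfying M = Exp_M(Σ_k w_k Log_M(Y_k)) for Y ∈ {X, γ, ε} with weights w_k summing to 1, and Tr(Log(X_k)) = Tr(Log(γ_k)) + Tr(Log(ε_k)) for all k, then Tr(Log(M^X)) = Σ_k w_k Tr(Log(X_k)),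 and consequently Tr(Log(M^X)) = Tr(Log(M^γ)) + Tr(Log(M^ε)). -/
open Matrix
open scoped ComplexOrder Classical

lemma mLog_isHermitian {d : ℕ} {B : Matrix (Fin d) (Fin d) ℂ} (hB : B.IsHermitian) :
    (mLog B).IsHermitian := by
  rw [mLog, dif_pos hB]
  have hD : (Matrix.diagonal (fun i => (Real.log (hB.eigenvalues i) : ℂ))).IsHermitian := by
    apply isHermitian_diagonal_of_self_adjoint
    ext i
    simp [Pi.star_apply, RCLike.star_def, Complex.conj_ofReal]
  have := isHermitian_mul_mul_conjTranspose
    (hB.eigenvectorUnitary : Matrix (Fin d) (Fin d) ℂ) hD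
  simpa [star_eq_conjTranspose, mul_assoc] using this

lemma trace_mLog {d : ℕ} {B : Matrix (Fin d) (Fin d) ℂ} (hB : B.PosDef) :
    (mLog B).trace = ((Real.log (B.det.re)) : ℂ) := by
  have hH := hB.1
  rw [mLog, dif_pos hH, trace_mul_cycle, Matrix.mem_unitaryGroup_iff'.mp hH.eigenvectorUnitary.2,
    one_mul, trace_diagonal]
  have hdet : B.det = ((∏ i, hH.eigenvalues i : ℝ) : ℂ) := by
    rw [hH.det_eq_prod_eigenvalues]; push_cast; rfl
  rw [hdet]
  simp only [Complex.ofReal_re]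
  rw [Real.log_prod (fun i _ => (hB.eigenvalues_pos i).ne')]
  push_cast
  rfl

lemma herm_exp_eq_one {d : ℕ} {A : Matrix (Fin d) (Fin d) ℂ} (hA : A.IsHermitian)
    (h : mExp A = 1) : A = 0 := by
  set U : Matrix (Fin d) (Fin d) ℂ := (hA.eigenvectorUnitary : Matrix (Fin d) (Fin d) ℂ) with hUdef
  have hU1 : U * star U = 1 := Matrix.mem_unitaryGroup_iff.mp hA.eigenvectorUnitary.2
  have hU2 : star U * U = 1 := Matrix.mem_unitaryGroup_iff'.mp hA.eigenvectorUnitary.2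
  set Uu : (Matrix (Fin d) (Fin d) ℂ)ˣ := ⟨U, star U, hU1, hU2⟩ with hUu
  have hspec : A = U * Matrix.diagonal (RCLike.ofReal ∘ hA.eigenvalues) * star U :=
    hA.spectral_theorem.trans (Unitary.conjStarAlgAut_apply _ _)
  have hexp : mExp A = U * NormedSpace.exp (Matrix.diagonal (RCLike.ofReal ∘ hA.eigenvalues))
      * star U := by
    have h1 : mExp A = NormedSpace.exp
        (U * Matrix.diagonal (RCLike.ofReal ∘ hA.eigenvalues) * star U) :=
      congrArg (NormedSpace.exp) hspec
    refine h1.trans ?_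
    have h2 : NormedSpace.exp ((Uu : Matrix (Fin d) (Fin d) ℂ) *
          Matrix.diagonal (RCLike.ofReal ∘ hA.eigenvalues) * (↑Uu⁻¹ : Matrix (Fin d) (Fin d) ℂ))
        = (Uu : Matrix (Fin d) (Fin d) ℂ) *
          NormedSpace.exp (Matrix.diagonal (RCLike.ofReal ∘ hA.eigenvalues)) *
          (↑Uu⁻¹ : Matrix (Fin d) (Fin d) ℂ) :=
      Matrix.exp_units_conj Uu (Matrix.diagonal (RCLike.ofReal ∘ hA.eigenvalues))
    exact h2
  rw [hexp] at h
  have hdiag : NormedSpace.exp (Matrix.diagonal ((RCLike.ofReal ∘ hA.eigenvalues : Fin d → ℂ))) = (1 : Matrix (Fin d) (Fin d) ℂ) := by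
    have := congrArg (fun (X : Matrix (Fin d) (Fin d) ℂ) => star U * X * U) h
    rw [mul_one, hU2, ← mul_assoc, ← mul_assoc, hU2, one_mul, mul_assoc, hU2, mul_one] at this
    exact this
  rw [Matrix.exp_diagonal] at hdiag
  have hev : ∀ i, hA.eigenvalues i = 0 := by
    intro i
    have : NormedSpace.exp ((hA.eigenvalues i : ℂ)) = 1 := by
      have := congrFun (congrFun hdiag i) i
      simpa [Matrix.diagonal, Matrix.one_apply] using this
    rw [← Complex.exp_eq_exp_ℂ, ← Complex.ofReal_exp] at this
    have : Real.exp (hA.eigenvalues i) = 1 := by exact_mod_cast this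
    have h0 : Real.exp (hA.eigenvalues i) = Real.exp 0 := by rw [this, Real.exp_zero]
    exact Real.exp_eq_exp.mp h0
  rw [hspec]
  have : Matrix.diagonal (RCLike.ofReal ∘ hA.eigenvalues)
      = (0 : Matrix (Fin d) (Fin d) ℂ) := by
    ext i j
    by_cases hij : i = j <;> simp [Matrix.diagonal_apply, hij, hev]
  rw [this, mul_zero, zero_mul]

lemma posDef_conj_s8 {d : ℕ} {B C : Matrix (Fin d) (Fin d) ℂ} (hB : B.PosDef)
    (hC : IsUnit C.det) : (Cᴴ * B * C).PosDef := by
  exact hB.conjTranspose_mul_mul_same (mulVec_injective_of_isUnit ((Matrix.isUnit_iff_isUnit_det C).mpr hC))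

lemma msqrt_eq {d : ℕ} {M : Matrix (Fin d) (Fin d) ℂ} (hM : M.PosDef) :
    msqrt M = hM.posSemidef.1.eigenvectorUnitary.1 *
      diagonal ((↑) ∘ (√·) ∘ hM.posSemidef.1.eigenvalues) *
      (star hM.posSemidef.1.eigenvectorUnitary : Matrix (Fin d) (Fin d) ℂ) :=
  dif_pos hM.posSemidef

lemma msqrt_mul_self {d : ℕ} {M : Matrix (Fin d) (Fin d) ℂ} (hM : M.PosDef) :
    msqrt M * msqrt M = M := by
  rw [msqrt_eq hM]
  set U : Matrix (Fin d) (Fin d) ℂ := hM.posSemidef.1.eigenvectorUnitary.1 with hU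
  have hU2 : star U * U = 1 :=
    Matrix.mem_unitaryGroup_iff'.mp hM.posSemidef.1.eigenvectorUnitary.2
  have hsp : M = U * diagonal (RCLike.ofReal ∘ hM.posSemidef.1.eigenvalues) * star U :=
    hM.posSemidef.1.spectral_theorem.trans (Unitary.conjStarAlgAut_apply _ _)
  set D : Matrix (Fin d) (Fin d) ℂ :=
    diagonal ((↑) ∘ (√·) ∘ hM.posSemidef.1.eigenvalues) with hD
  have hDD : D * D = diagonal (RCLike.ofReal ∘ hM.posSemidef.1.eigenvalues) := by
    rw [hD, diagonal_mul_diagonal]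
    congr 1
    ext i
    simp only [Function.comp_apply, ← Complex.ofReal_mul,
      Real.mul_self_sqrt (hM.eigenvalues_pos i).le]
    rfl
  have hsU : (star hM.posSemidef.1.eigenvectorUnitary : Matrix (Fin d) (Fin d) ℂ) = star U := rfl
  rw [hsU]
  calc U * D * star U * (U * D * star U) = U * (D * D) * star U := by
        simp only [mul_assoc]; rw [← mul_assoc (star U) U, hU2, one_mul]
    _ = M := by rw [hDD, ← hsp]

lemma msqrt_posDef {d : ℕ} {M : Matrix (Fin d) (Fin d) ℂ} (hM : M.PosDef) :
    (msqrt M).PosDef := by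
  rw [msqrt_eq hM]
  set U : Matrix (Fin d) (Fin d) ℂ := hM.posSemidef.1.eigenvectorUnitary.1
  have hU2 : star U * U = 1 := Matrix.mem_unitaryGroup_iff'.mp hM.posSemidef.1.eigenvectorUnitary.2
  have hdetU : IsUnit (star U).det := by
    have : (star U).det * U.det = 1 := by rw [← Matrix.det_mul, hU2, Matrix.det_one]
    exact IsUnit.of_mul_eq_one _ this
  have hD : (Matrix.diagonal ((↑) ∘ Real.sqrt ∘ hM.posSemidef.1.eigenvalues :
      Fin d → ℂ)).PosDef := by
    refine Matrix.PosDef.diagonal fun i => ?_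
    have h1 : 0 < hM.posSemidef.1.eigenvalues i := hM.eigenvalues_pos i
    have : (0:ℝ) < Real.sqrt (hM.posSemidef.1.eigenvalues i) := Real.sqrt_pos.mpr h1
    simpa [Complex.zero_lt_real] using this
  have := posDef_conj_s8 hD hdetU
  simpa [star_eq_conjTranspose] using this

lemma karcher_trace {d : ℕ} {ι : Type*} [Fintype ι]
    {Y : ι → Matrix (Fin d) (Fin d) ℂ} {w : ι → ℝ} {M : Matrix (Fin d) (Fin d) ℂ}
    (hw1 : ∑ k, w k = 1) (hY : ∀ k, (Y k).PosDef) (hM : M.PosDef)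
    (hK : M = expMap M (∑ k, (w k : ℂ) • logMap M (Y k))) :
    (mLog M).trace = ∑ k, (w k : ℂ) * (mLog (Y k)).trace := by
  set P : Matrix (Fin d) (Fin d) ℂ := msqrt M with hPdef
  have hP : P.PosDef := msqrt_posDef hM
  have hPP : P * P = M := msqrt_mul_self hM
  have hPd : IsUnit P.det := hP.det_pos.ne'.isUnit
  have hPinv : P⁻¹ * P = 1 := Matrix.nonsing_inv_mul P hPd
  have hPinv' : P * P⁻¹ = 1 := Matrix.mul_nonsing_inv P hPd
  have hPid : IsUnit (P⁻¹).det := by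
    have : (P⁻¹).det * P.det = 1 := by rw [← Matrix.det_mul, hPinv, Matrix.det_one]
    exact IsUnit.of_mul_eq_one _ this
  have hQ : ∀ k, (P⁻¹ * Y k * P⁻¹).PosDef := by
    intro k
    have h1 := posDef_conj_s8 (hY k) hPid
    rwa [hP.1.inv.eq] at h1
  have key : ∀ B : Matrix (Fin d) (Fin d) ℂ, P⁻¹ * (P * B * P) * P⁻¹ = B := by
    intro B
    simp only [← mul_assoc]
    rw [hPinv, one_mul, mul_assoc, hPinv', mul_one]
  set S : Matrix (Fin d) (Fin d) ℂ := ∑ k, (w k : ℂ) • logMap M (Y k) with hSdef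
  have hA'eq : P⁻¹ * S * P⁻¹ = ∑ k, (w k : ℂ) • mLog (P⁻¹ * Y k * P⁻¹) := by
    rw [hSdef]
    simp only [logMap, ← hPdef]
    rw [Finset.mul_sum, Finset.sum_mul]
    refine Finset.sum_congr rfl fun k _ => ?_
    rw [mul_smul_comm, smul_mul_assoc, key]
  have hTH : (∑ k, (w k : ℂ) • mLog (P⁻¹ * Y k * P⁻¹)).IsHermitian := by
    unfold Matrix.IsHermitian
    rw [Matrix.conjTranspose_sum]
    refine Finset.sum_congr rfl fun k _ => ?_
    rw [Matrix.conjTranspose_smul, (mLog_isHermitian (hQ k).1).eq]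
    simp [Complex.star_def, Complex.conj_ofReal]
  have hexp1 : mExp (∑ k, (w k : ℂ) • mLog (P⁻¹ * Y k * P⁻¹)) = 1 := by
    have h1 : M = P * mExp (P⁻¹ * S * P⁻¹) * P := hK
    have h2 := congrArg (fun X => P⁻¹ * X * P⁻¹) h1
    rw [key, ← hPP] at h2
    rw [← hA'eq]
    rw [← h2]
    simp only [← mul_assoc]
    rw [hPinv, one_mul, hPinv']
  have hT0 : (∑ k, (w k : ℂ) • mLog (P⁻¹ * Y k * P⁻¹)) = 0 :=
    herm_exp_eq_one hTH hexp1
  -- trace identities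
  have hMdet : M.det = P.det * P.det := by rw [← hPP, Matrix.det_mul]
  obtain ⟨hpr, hpi⟩ := Complex.lt_def.mp hP.det_pos
  simp only [Complex.zero_re, Complex.zero_im] at hpr hpi
  have hPre : P.det = ((P.det.re : ℝ) : ℂ) := Complex.ext rfl (by simp [← hpi])
  have htrL : ∀ k, (mLog (P⁻¹ * Y k * P⁻¹)).trace
      = (mLog (Y k)).trace - (mLog M).trace := by
    intro k
    obtain ⟨hyr, hyi⟩ := Complex.lt_def.mp (hY k).det_pos
    simp only [Complex.zero_re, Complex.zero_im] at hyr hyi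
    have hYre : (Y k).det = (((Y k).det.re : ℝ) : ℂ) := Complex.ext rfl (by simp [← hyi])
    rw [trace_mLog (hQ k), trace_mLog (hY k), trace_mLog hM, ← Complex.ofReal_sub]
    congr 1
    have hQdet : (P⁻¹ * Y k * P⁻¹).det = P.det⁻¹ * (Y k).det * P.det⁻¹ := by
      rw [Matrix.det_mul, Matrix.det_mul, Matrix.det_nonsing_inv, Ring.inverse_eq_inv']
    have hre : (P⁻¹ * Y k * P⁻¹).det.re = (P.det.re)⁻¹ * (Y k).det.re * (P.det.re)⁻¹ := by
      rw [hQdet, hPre, hYre]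
      simp [← Complex.ofReal_inv, ← Complex.ofReal_mul]
    have hmre : M.det.re = P.det.re * P.det.re := by
      rw [hMdet, hPre]
      simp [← Complex.ofReal_mul]
    rw [hre, hmre]
    rw [Real.log_mul (by positivity) (by positivity), Real.log_mul (by positivity) hyr.ne',
      Real.log_mul hpr.ne' hpr.ne', Real.log_inv]
    ring
  have h0 := congrArg Matrix.trace hT0
  rw [Matrix.trace_sum] at h0
  simp only [Matrix.trace_smul, smul_eq_mul, Matrix.trace_zero] at h0
  rw [Finset.sum_congr rfl (fun k _ => by rw [htrL k])] at h0
  have hw1c : (∑ k, (w k : ℂ)) = 1 := by exact_mod_cast congrArg (Complex.ofReal) hw1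
  simp only [mul_sub] at h0
  rw [Finset.sum_sub_distrib, ← Finset.sum_mul, hw1c, one_mul, sub_eq_zero] at h0
  exact h0.symm


theorem trace_mLog_karcher_mean_decomposition {d : ℕ} {ι : Type*} [Fintype ι]
    (X γ ε : ι → Matrix (Fin d) (Fin d) ℂ) (w : ι → ℝ)
    (MX Mγ Mε : Matrix (Fin d) (Fin d) ℂ)
    (hw0 : ∀ k, 0 ≤ w k) (hw1 : ∑ k, w k = 1)
    (hX : ∀ k, (X k).PosDef) (hγ : ∀ k, (γ k).PosDef) (hε : ∀ k, (ε k).PosDef)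
    (hMX : MX.PosDef) (hMγ : Mγ.PosDef) (hMε : Mε.PosDef)
    (hmodel : ∀ k, X k = msqrt (γ k) * ε k * msqrt (γ k))
    (hKX : MX = expMap MX (∑ k, (w k : ℂ) • logMap MX (X k)))
    (hKγ : Mγ = expMap Mγ (∑ k, (w k : ℂ) • logMap Mγ (γ k)))
    (hKε : Mε = expMap Mε (∑ k, (w k : ℂ) • logMap Mε (ε k)))
    (htr : ∀ k, (mLog (X k)).trace = (mLog (γ k)).trace + (mLog (ε k)).trace) :
    (mLog MX).trace = ∑ k, (w k : ℂ) * (mLog (X k)).trace ∧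
      (mLog MX).trace = (mLog Mγ).trace + (mLog Mε).trace := by
  have h1 : (mLog MX).trace = ∑ k, (w k : ℂ) * (mLog (X k)).trace :=
    karcher_trace hw1 hX hMX hKX
  have h2 : (mLog Mγ).trace = ∑ k, (w k : ℂ) * (mLog (γ k)).trace :=
    karcher_trace hw1 hγ hMγ hKγ
  have h3 : (mLog Mε).trace = ∑ k, (w k : ℂ) * (mLog (ε k)).trace :=
    karcher_trace hw1 hε hMε hKε
  refine ⟨h1, ?_⟩
  rw [h1, h2, h3, ← Finset.sum_add_distrib]
  refine Finset.sum_congr rfl fun k _ => ?_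
  rw [htr k, mul_add]
end
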